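/- Let r : [0,1]² → (0,1) be measurable with log r, log(1-r) ∈ L¹([0,1]²). For a graphon f, let f̄_n and r̄_n denote the level-n block-average approximants. If r̄_n → r a.e. and f̄_n → f in L², then I_{r̄_n}(f̄_n) → I_r(f) as n → ∞. -/

import Mathlib

open MeasureTheory Filter Set

noncomputable def Rent (a b : ℝ) : ℝ :=
  a * Real.log (a / b) + (1 - a) * Real.log ((1 - a) / (1 - b))

noncomputable def sqMeasure : Measure (ℝ × ℝ) :=
  volume.restrict (Set.Icc (0:ℝ) 1 ×ˢ Set.Icc (0:ℝ) 1)

noncomputable def blockAvg (n : ℕ) (h : ℝ × ℝ → ℝ) : ℝ × ℝ → ℝ := fun q =>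
  (n:ℝ)^2 * ∫ p in
      Set.Ico ((⌊(n:ℝ) * q.1⌋ : ℝ) / n) (((⌊(n:ℝ) * q.1⌋ : ℝ) + 1) / n) ×ˢ
      Set.Ico ((⌊(n:ℝ) * q.2⌋ : ℝ) / n) (((⌊(n:ℝ) * q.2⌋ : ℝ) + 1) / n), h p

namespace BAux

def SQ : Set (ℝ × ℝ) := Set.Icc (0:ℝ) 1 ×ˢ Set.Icc (0:ℝ) 1
def SG : Set (ℝ × ℝ) := Set.Ico (0:ℝ) 1 ×ˢ Set.Ico (0:ℝ) 1

/-- the block containing `q` at level `n`. -/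
def block (n : ℕ) (q : ℝ × ℝ) : Set (ℝ × ℝ) :=
  Set.Ico ((⌊(n:ℝ) * q.1⌋ : ℝ) / n) (((⌊(n:ℝ) * q.1⌋ : ℝ) + 1) / n) ×ˢ
  Set.Ico ((⌊(n:ℝ) * q.2⌋ : ℝ) / n) (((⌊(n:ℝ) * q.2⌋ : ℝ) + 1) / n)

lemma blockAvg_def (n : ℕ) (h : ℝ × ℝ → ℝ) (q : ℝ × ℝ) :
    blockAvg n h q = (n:ℝ)^2 * ∫ p in block n q, h p := rfl

lemma blockAvg_zero (h : ℝ × ℝ → ℝ) (q : ℝ × ℝ) : blockAvg 0 h q = 0 := by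
  simp [blockAvg]

lemma measurableSet_block (n : ℕ) (q : ℝ × ℝ) : MeasurableSet (block n q) :=
  (measurableSet_Ico.prod measurableSet_Ico)

lemma measurableSet_SQ : MeasurableSet SQ := measurableSet_Icc.prod measurableSet_Icc
lemma measurableSet_SG : MeasurableSet SG := measurableSet_Ico.prod measurableSet_Ico

lemma volume_block {n : ℕ} (hn : 1 ≤ n) (q : ℝ × ℝ) :
    volume (block n q) = ENNReal.ofReal (1/n) * ENNReal.ofReal (1/n) := by
  have hn' : (0:ℝ) < n := by exact_mod_cast hn
  have hlen : ∀ z : ℤ, ((z:ℝ)+1)/n - (z:ℝ)/n = 1/n := by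
    intro z; field_simp; ring
  rw [block, Measure.volume_eq_prod, Measure.prod_prod, Real.volume_Ico, Real.volume_Ico,
    hlen, hlen]

lemma volume_block_toReal {n : ℕ} (hn : 1 ≤ n) (q : ℝ × ℝ) :
    (volume (block n q)).toReal = 1/n^2 := by
  have hn' : (0:ℝ) < n := by exact_mod_cast hn
  rw [volume_block hn q, ENNReal.toReal_mul, ENNReal.toReal_ofReal (by positivity)]
  rw [sq]; ring

lemma volume_block_ne_top {n : ℕ} (q : ℝ × ℝ) : volume (block n q) ≠ ⊤ := by
  rcases Nat.eq_zero_or_pos n with h | h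
  · subst h
    simp only [block]
    rw [Measure.volume_eq_prod, Measure.prod_prod, Real.volume_Ico]
    simp
  · rw [volume_block h q]; exact ENNReal.mul_ne_top ENNReal.ofReal_ne_top ENNReal.ofReal_ne_top

lemma measurable_blockAvg (n : ℕ) (h : ℝ × ℝ → ℝ) : Measurable (blockAvg n h) := by
  have : blockAvg n h = (fun z : ℤ × ℤ => (n:ℝ)^2 * ∫ p in
      Set.Ico ((z.1 : ℝ) / n) (((z.1 : ℝ) + 1) / n) ×ˢ
      Set.Ico ((z.2 : ℝ) / n) (((z.2 : ℝ) + 1) / n), h p) ∘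
      (fun q : ℝ × ℝ => (⌊(n:ℝ) * q.1⌋, ⌊(n:ℝ) * q.2⌋)) := rfl
  rw [this]
  exact (measurable_of_countable _).comp
    ((Int.measurable_floor.comp (measurable_fst.const_mul _)).prodMk
     (Int.measurable_floor.comp (measurable_snd.const_mul _)))

lemma block_subset_SQ {n : ℕ} (hn : 1 ≤ n) {q : ℝ × ℝ} (hq : q ∈ SG) :
    block n q ⊆ SQ := by
  have hn' : (0:ℝ) < n := by exact_mod_cast hn
  obtain ⟨hq1, hq2⟩ := hq
  have key : ∀ x : ℝ, x ∈ Set.Ico (0:ℝ) 1 →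
      Set.Ico ((⌊(n:ℝ) * x⌋ : ℝ) / n) (((⌊(n:ℝ) * x⌋ : ℝ) + 1) / n) ⊆ Set.Icc (0:ℝ) 1 := by
    intro x hx y hy
    have h0 : (0:ℤ) ≤ ⌊(n:ℝ) * x⌋ := Int.floor_nonneg.2 (by nlinarith [hx.1])
    have h1 : ⌊(n:ℝ) * x⌋ + 1 ≤ (n:ℤ) := by
      have : (n:ℝ) * x < (n:ℝ) * 1 := by nlinarith [hx.2]
      have := Int.floor_lt.2 (by push_cast; linarith : (n:ℝ) * x < ((n:ℤ):ℝ))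
      omega
    constructor
    · have : (0:ℝ) ≤ (⌊(n:ℝ) * x⌋ : ℝ) / n := by
        apply div_nonneg _ hn'.le; exact_mod_cast h0
      linarith [hy.1]
    · have h1' : ((⌊(n:ℝ) * x⌋:ℝ) + 1) / n ≤ 1 := by
        rw [div_le_one hn']
        have : ((⌊(n:ℝ) * x⌋ : ℝ) + 1) ≤ ((n:ℤ):ℝ) := by exact_mod_cast h1
        simpa using this
      linarith [hy.2]
  rintro ⟨a, b⟩ ⟨ha, hb⟩
  exact ⟨key _ hq1 ha, key _ hq2 hb⟩

lemma integrableOn_block_of_bounded {h : ℝ × ℝ → ℝ} (hm : Measurable h)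
    {n : ℕ} {q : ℝ × ℝ} {M : ℝ} (hb : ∀ p ∈ block n q, ‖h p‖ ≤ M) :
    IntegrableOn h (block n q) volume := by
  apply Measure.integrableOn_of_bounded (volume_block_ne_top q)
    hm.aestronglyMeasurable
  exact (ae_restrict_iff' (measurableSet_block n q)).2 (Filter.Eventually.of_forall hb)

lemma integrableOn_block_of_integrable {h : ℝ × ℝ → ℝ}
    (hint : Integrable h sqMeasure) {n : ℕ} {q : ℝ × ℝ} (hsub : block n q ⊆ SQ) :
    IntegrableOn h (block n q) volume := by
  have : IntegrableOn h SQ volume := hint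
  exact this.mono_set hsub

lemma blockAvg_nonneg {h : ℝ × ℝ → ℝ} {n : ℕ} {q : ℝ × ℝ}
    (h0 : ∀ p ∈ block n q, 0 ≤ h p) : 0 ≤ blockAvg n h q := by
  rw [blockAvg_def]
  have : 0 ≤ ∫ p in block n q, h p := setIntegral_nonneg (measurableSet_block n q) h0
  positivity

lemma blockAvg_le_one {h : ℝ × ℝ → ℝ} (hm : Measurable h) {n : ℕ} (hn : 1 ≤ n) {q : ℝ × ℝ}
    (h01 : ∀ p ∈ block n q, h p ≤ 1) (h0 : ∀ p ∈ block n q, 0 ≤ h p) :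
    blockAvg n h q ≤ 1 := by
  have hn' : (0:ℝ) < n := by exact_mod_cast hn
  rw [blockAvg_def]
  have hi : IntegrableOn h (block n q) volume := by
    apply integrableOn_block_of_bounded hm (M := 1)
    intro p hp; rw [Real.norm_eq_abs, abs_le]; exact ⟨by linarith [h0 p hp], h01 p hp⟩
  have : ∫ p in block n q, h p ≤ ∫ p in block n q, (1:ℝ) :=
    setIntegral_mono_on hi (integrableOn_const (volume_block_ne_top q))
      (measurableSet_block n q) h01
  rw [setIntegral_const, measureReal_def, volume_block_toReal hn q, smul_eq_mul, mul_one] at this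
  calc (n:ℝ)^2 * ∫ p in block n q, h p ≤ (n:ℝ)^2 * (1/n^2) := by nlinarith
  _ = 1 := by field_simp

lemma blockAvg_pos {h : ℝ × ℝ → ℝ} (hm : Measurable h) {n : ℕ} (hn : 1 ≤ n) {q : ℝ × ℝ}
    (hsub : block n q ⊆ SQ) (hpos : ∀ p ∈ block n q, 0 < h p)
    (hb : ∀ p ∈ block n q, h p ≤ 1) : 0 < blockAvg n h q := by
  rw [blockAvg_def]
  have hn' : (0:ℝ) < n := by exact_mod_cast hn
  have hi : IntegrableOn h (block n q) volume := by
    apply integrableOn_block_of_bounded hm (M := 1)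
    intro p hp; rw [Real.norm_eq_abs, abs_le]
    exact ⟨by linarith [hpos p hp], hb p hp⟩
  have h0 : (0:ℝ) < ∫ p in block n q, h p := by
    rw [setIntegral_pos_iff_support_of_nonneg_ae _ hi]
    · have : block n q ⊆ Function.support h ∩ block n q := by
        intro p hp; exact ⟨(hpos p hp).ne', hp⟩
      refine lt_of_lt_of_le ?_ (measure_mono this)
      rw [volume_block hn q]
      have : (0:ℝ) < 1/n := by positivity
      have h2 := ENNReal.ofReal_pos.2 this
      exact ENNReal.mul_pos h2.ne' h2.ne'
    · rw [EventuallyLE, ae_restrict_iff' (measurableSet_block n q)]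
      exact Filter.Eventually.of_forall fun p hp => (hpos p hp).le
  positivity

lemma blockAvg_one_sub {s : ℝ × ℝ → ℝ} {n : ℕ} (hn : 1 ≤ n) {q : ℝ × ℝ}
    (hi : IntegrableOn s (block n q) volume) :
    blockAvg n (fun p => 1 - s p) q = 1 - blockAvg n s q := by
  have hn' : (0:ℝ) < n := by exact_mod_cast hn
  rw [blockAvg_def, blockAvg_def]
  rw [integral_sub (f := fun _ => (1:ℝ)) (μ := volume.restrict (block n q)) (integrableOn_const (volume_block_ne_top q)) hi]
  rw [setIntegral_const, measureReal_def, volume_block_toReal hn q, smul_eq_mul, mul_one, mul_sub]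
  have : (n:ℝ)^2 * (1/n^2) = 1 := by field_simp
  rw [this]

lemma blockAvg_neg (v : ℝ × ℝ → ℝ) (n : ℕ) (q : ℝ × ℝ) :
    blockAvg n (fun p => -v p) q = - blockAvg n v q := by
  rw [blockAvg_def, blockAvg_def, integral_neg, mul_neg]

lemma abs_blockAvg_le {v : ℝ × ℝ → ℝ} (hv : Integrable v sqMeasure)
    {n : ℕ} {q : ℝ × ℝ} (hsub : block n q ⊆ SQ) :
    |blockAvg n v q| ≤ (n:ℝ)^2 * ∫ p in SQ, |v p| := by
  rw [blockAvg_def, abs_mul, abs_of_nonneg (by positivity : (0:ℝ) ≤ (n:ℝ)^2)]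
  have habs : IntegrableOn (fun p => |v p|) SQ volume := by
    have : Integrable (fun p => |v p|) sqMeasure := hv.abs
    exact this
  have h1 : |∫ p in block n q, v p| ≤ ∫ p in block n q, |v p| := by
    simpa [Real.norm_eq_abs] using
      norm_integral_le_integral_norm (μ := volume.restrict (block n q)) v
  have h2 : ∫ p in block n q, |v p| ≤ ∫ p in SQ, |v p| := by
    apply setIntegral_mono_set habs
    · exact Filter.Eventually.of_forall fun p => abs_nonneg _
    · exact HasSubset.Subset.eventuallyLE hsub
  have : (0:ℝ) ≤ (n:ℝ)^2 := by positivity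
  exact mul_le_mul_of_nonneg_left (h1.trans h2) this

lemma volume_SQ : volume SQ = 1 := by
  rw [SQ, Measure.volume_eq_prod, Measure.prod_prod, Real.volume_Icc]
  simp

instance : IsFiniteMeasure sqMeasure := by
  constructor
  rw [sqMeasure, Measure.restrict_apply_univ]
  have h := volume_SQ
  rw [SQ] at h
  rw [h]
  exact ENNReal.one_lt_top

lemma ae_mem_SQ : ∀ᵐ q ∂sqMeasure, q ∈ SQ := ae_restrict_mem measurableSet_SQ

lemma SQ_diff_SG_null : volume (SQ \ SG) = 0 := by
  have hsub : SQ \ SG ⊆ ({(1:ℝ)} ×ˢ (Set.univ : Set ℝ)) ∪ ((Set.univ : Set ℝ) ×ˢ {(1:ℝ)}) := by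
    rintro ⟨a, b⟩ ⟨⟨ha, hb⟩, hn⟩
    by_cases h1 : a < 1
    · right
      refine ⟨trivial, ?_⟩
      have hb1 : ¬ b < 1 := fun hb1 => hn ⟨⟨ha.1, h1⟩, ⟨hb.1, hb1⟩⟩
      simp only [Set.mem_singleton_iff]
      exact le_antisymm hb.2 (not_lt.1 hb1)
    · left
      refine ⟨?_, trivial⟩
      simp only [Set.mem_singleton_iff]
      exact le_antisymm ha.2 (not_lt.1 h1)
  apply measure_mono_null hsub
  apply measure_union_null
  · rw [Measure.volume_eq_prod, Measure.prod_prod]; simp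
  · rw [Measure.volume_eq_prod, Measure.prod_prod]; simp

lemma ae_mem_SG : ∀ᵐ q ∂sqMeasure, q ∈ SG := by
  have hrw : sqMeasure = volume.restrict SQ := rfl
  rw [hrw, ae_restrict_iff' measurableSet_SQ]
  have h0 : volume (SQ \ SG) = 0 := SQ_diff_SG_null
  filter_upwards [measure_eq_zero_iff_ae_notMem.1 h0] with q hq hqSQ
  by_contra hg
  exact hq ⟨hqSQ, hg⟩

lemma SG_ae_eq_SQ : SG =ᵐ[volume] SQ := by
  have h2 : SG ⊆ SQ := by
    rintro ⟨a,b⟩ ⟨ha, hb⟩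
    exact ⟨⟨ha.1, ha.2.le⟩, ⟨hb.1, hb.2.le⟩⟩
  have h1 : volume (SQ \ SG) = 0 := SQ_diff_SG_null
  rw [Filter.eventuallyEq_set]
  filter_upwards [measure_eq_zero_iff_ae_notMem.1 h1] with q hq
  constructor
  · intro h; exact h2 h
  · intro h
    by_contra hg
    exact hq ⟨h, hg⟩

lemma integrable_blockAvg {v : ℝ × ℝ → ℝ} (hvm : Measurable v)
    (hv : Integrable v sqMeasure) (n : ℕ) :
    Integrable (blockAvg n v) sqMeasure := by
  rcases Nat.eq_zero_or_pos n with h | h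
  · subst h
    have h0 : blockAvg 0 v = fun _ => (0:ℝ) := funext (blockAvg_zero v)
    rw [h0]
    exact integrable_zero _ _ _
  apply Integrable.mono' (g := fun _ => (n:ℝ)^2 * ∫ p in SQ, |v p|)
    (integrable_const _) (measurable_blockAvg n v).aestronglyMeasurable
  filter_upwards [ae_mem_SG] with q hq
  rw [Real.norm_eq_abs]
  exact abs_blockAvg_le hv (block_subset_SQ h hq)

lemma jensen_log {s : ℝ × ℝ → ℝ} (hsm : Measurable s) {n : ℕ} (hn : 1 ≤ n) {q : ℝ × ℝ}
    (hsub : block n q ⊆ SQ) (hs : ∀ p ∈ SQ, s p ∈ Set.Ioo (0:ℝ) 1)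
    (hls : Integrable (fun p => Real.log (s p)) sqMeasure) :
    blockAvg n (fun p => Real.log (s p)) q ≤ Real.log (blockAvg n s q) := by
  have hn' : (0:ℝ) < n := by exact_mod_cast hn
  set m := blockAvg n s q with hm
  have hpos : ∀ p ∈ block n q, 0 < s p := fun p hp => (hs p (hsub hp)).1
  have hle1 : ∀ p ∈ block n q, s p ≤ 1 := fun p hp => (hs p (hsub hp)).2.le
  have hmpos : 0 < m := blockAvg_pos hsm hn hsub hpos hle1
  have hsi : IntegrableOn s (block n q) volume := by
    apply integrableOn_block_of_bounded hsm (M := 1)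
    intro p hp; rw [Real.norm_eq_abs, abs_le]
    exact ⟨by linarith [hpos p hp], hle1 p hp⟩
  have hlsi : IntegrableOn (fun p => Real.log (s p)) (block n q) volume :=
    (integrableOn_block_of_integrable hls hsub)
  -- pointwise : log (s p) ≤ s p / m + (log m - 1) on the block
  have hconst : IntegrableOn (fun _ : ℝ × ℝ => Real.log m - 1) (block n q) volume :=
    integrableOn_const (volume_block_ne_top q)
  have hpt : ∀ p ∈ block n q, Real.log (s p) ≤ s p / m + (Real.log m - 1) := by
    intro p hp
    have h1 : Real.log (s p / m) ≤ s p / m - 1 :=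
      Real.log_le_sub_one_of_pos (div_pos (hpos p hp) hmpos)
    rw [Real.log_div (hpos p hp).ne' hmpos.ne'] at h1
    linarith
  have hInt2 : IntegrableOn (fun p => s p / m + (Real.log m - 1)) (block n q) volume := by
    have := (hsi.div_const m).add hconst
    exact this
  have hint : ∫ p in block n q, Real.log (s p) ≤
      ∫ p in block n q, (s p / m + (Real.log m - 1)) :=
    setIntegral_mono_on hlsi hInt2 (measurableSet_block n q) hpt
  have hIs : ∫ p in block n q, s p = m / n^2 := by
    rw [hm, blockAvg_def]; field_simp
  have hrhs : ∫ p in block n q, (s p / m + (Real.log m - 1)) = Real.log m / n^2 := by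
    rw [integral_add (hsi.div_const m) hconst, integral_div, hIs, setIntegral_const, measureReal_def,
      volume_block_toReal hn q, smul_eq_mul]
    field_simp
    ring
  rw [hrhs] at hint
  rw [blockAvg_def]
  calc (n:ℝ)^2 * ∫ p in block n q, Real.log (s p) ≤ (n:ℝ)^2 * (Real.log m / n^2) := by nlinarith
  _ = Real.log m := by field_simp

def Bset (n i j : ℕ) : Set (ℝ × ℝ) :=
  Set.Ico ((i:ℝ)/n) (((i:ℝ)+1)/n) ×ˢ Set.Ico ((j:ℝ)/n) (((j:ℝ)+1)/n)

lemma measurableSet_Bset (n i j : ℕ) : MeasurableSet (Bset n i j) :=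
  measurableSet_Ico.prod measurableSet_Ico

lemma volume_Bset {n : ℕ} (hn : 1 ≤ n) (i j : ℕ) :
    volume (Bset n i j) = ENNReal.ofReal (1/n) * ENNReal.ofReal (1/n) := by
  have hn' : (0:ℝ) < n := by exact_mod_cast hn
  have hlen : ∀ z : ℕ, ((z:ℝ)+1)/n - (z:ℝ)/n = 1/n := by intro z; field_simp; ring
  rw [Bset, Measure.volume_eq_prod, Measure.prod_prod, Real.volume_Ico, Real.volume_Ico,
    hlen, hlen]

lemma volume_Bset_ne_top {n : ℕ} (hn : 1 ≤ n) (i j : ℕ) : volume (Bset n i j) ≠ ⊤ := by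
  rw [volume_Bset hn]; exact ENNReal.mul_ne_top ENNReal.ofReal_ne_top ENNReal.ofReal_ne_top

lemma volume_Bset_toReal {n : ℕ} (hn : 1 ≤ n) (i j : ℕ) :
    (volume (Bset n i j)).toReal = 1/n^2 := by
  have hn' : (0:ℝ) < n := by exact_mod_cast hn
  rw [volume_Bset hn, ENNReal.toReal_mul, ENNReal.toReal_ofReal (by positivity)]
  rw [sq]; ring

lemma floor_eq_of_mem {n i : ℕ} (hn : 1 ≤ n) {x : ℝ}
    (hx : x ∈ Set.Ico ((i:ℝ)/n) (((i:ℝ)+1)/n)) : ⌊(n:ℝ) * x⌋ = (i:ℤ) := by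
  have hn' : (0:ℝ) < n := by exact_mod_cast hn
  obtain ⟨h1, h2⟩ := hx
  rw [div_le_iff₀ hn'] at h1
  rw [lt_div_iff₀ hn'] at h2
  rw [Int.floor_eq_iff]
  push_cast
  constructor <;> nlinarith

lemma block_eq_Bset {n i j : ℕ} (hn : 1 ≤ n) {q : ℝ × ℝ} (hq : q ∈ Bset n i j) :
    block n q = Bset n i j := by
  have h1 := floor_eq_of_mem hn hq.1
  have h2 := floor_eq_of_mem hn hq.2
  rw [block, h1, h2]
  push_cast
  rfl

lemma Bset_subset_SQ {n i j : ℕ} (hn : 1 ≤ n) (hi : i < n) (hj : j < n) :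
    Bset n i j ⊆ SQ := by
  have hn' : (0:ℝ) < n := by exact_mod_cast hn
  have key : ∀ k : ℕ, k < n → Set.Ico ((k:ℝ)/n) (((k:ℝ)+1)/n) ⊆ Set.Icc (0:ℝ) 1 := by
    intro k hk y hy
    have h0 : (0:ℝ) ≤ (k:ℝ)/n := by positivity
    have h1 : ((k:ℝ)+1)/n ≤ 1 := by
      rw [div_le_one hn']
      have : (k:ℝ) + 1 ≤ n := by exact_mod_cast hk
      linarith
    exact ⟨le_trans h0 hy.1, le_of_lt (lt_of_lt_of_le hy.2 h1)⟩
  rintro ⟨a, b⟩ ⟨ha, hb⟩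
  exact ⟨key i hi ha, key j hj hb⟩

lemma SG_eq_union {n : ℕ} (hn : 1 ≤ n) :
    SG = ⋃ ij ∈ Finset.range n ×ˢ Finset.range n, Bset n ij.1 ij.2 := by
  have hn' : (0:ℝ) < n := by exact_mod_cast hn
  ext q
  simp only [Set.mem_iUnion, Finset.mem_product, Finset.mem_range, exists_prop]
  constructor
  · rintro ⟨hq1, hq2⟩
    have key : ∀ x : ℝ, x ∈ Set.Ico (0:ℝ) 1 →
        ∃ k : ℕ, k < n ∧ x ∈ Set.Ico ((k:ℝ)/n) (((k:ℝ)+1)/n) := by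
      intro x hx
      have h0 : (0:ℤ) ≤ ⌊(n:ℝ) * x⌋ := Int.floor_nonneg.2 (by nlinarith [hx.1])
      refine ⟨⌊(n:ℝ) * x⌋.toNat, ?_, ?_, ?_⟩
      · have : ⌊(n:ℝ) * x⌋ < (n:ℤ) := Int.floor_lt.2 (by push_cast; nlinarith [hx.2])
        omega
      · have hc : ((⌊(n:ℝ)*x⌋.toNat : ℕ) : ℝ) = ((⌊(n:ℝ)*x⌋ : ℤ) : ℝ) := by
          exact_mod_cast congrArg (Int.cast : ℤ → ℝ) (Int.toNat_of_nonneg h0)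
        rw [div_le_iff₀ hn', hc]
        have := Int.floor_le ((n:ℝ) * x)
        linarith
      · have hc : ((⌊(n:ℝ)*x⌋.toNat : ℕ) : ℝ) = ((⌊(n:ℝ)*x⌋ : ℤ) : ℝ) := by
          exact_mod_cast congrArg (Int.cast : ℤ → ℝ) (Int.toNat_of_nonneg h0)
        rw [lt_div_iff₀ hn', hc]
        have := Int.lt_floor_add_one ((n:ℝ) * x)
        linarith
    obtain ⟨i, hi, hxi⟩ := key _ hq1
    obtain ⟨j, hj, hxj⟩ := key _ hq2
    exact ⟨(i, j), ⟨hi, hj⟩, hxi, hxj⟩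
  · rintro ⟨⟨i, j⟩, ⟨hi, hj⟩, hx, hy⟩
    have key : ∀ (k : ℕ) (x : ℝ), k < n → x ∈ Set.Ico ((k:ℝ)/n) (((k:ℝ)+1)/n) →
        x ∈ Set.Ico (0:ℝ) 1 := by
      intro k x hk hxk
      constructor
      · have : (0:ℝ) ≤ (k:ℝ)/n := by positivity
        linarith [hxk.1]
      · have h1 : ((k:ℝ)+1)/n ≤ 1 := by
          rw [div_le_one hn']
          have : (k:ℝ) + 1 ≤ n := by exact_mod_cast hk
          linarith
        linarith [hxk.2]
    exact ⟨key i q.1 hi hx, key j q.2 hj hy⟩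

lemma integral_blockAvg {u : ℝ × ℝ → ℝ} (hum : Measurable u)
    (hu : Integrable u sqMeasure) {n : ℕ} (hn : 1 ≤ n) :
    ∫ q, blockAvg n u q ∂sqMeasure = ∫ q, u q ∂sqMeasure := by
  have hn' : (0:ℝ) < n := by exact_mod_cast hn
  have hSQ : ∀ g : ℝ × ℝ → ℝ, (∫ q, g q ∂sqMeasure) = ∫ q in SQ, g q := fun g => rfl
  rw [hSQ, hSQ, ← setIntegral_congr_set SG_ae_eq_SQ,
    ← setIntegral_congr_set SG_ae_eq_SQ (f := u)]
  rw [SG_eq_union hn]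
  have hmeas : ∀ ij ∈ Finset.range n ×ˢ Finset.range n,
      MeasurableSet (Bset n (ij : ℕ × ℕ).1 ij.2) := fun ij _ => measurableSet_Bset n _ _
  have hdisj : Set.Pairwise ↑(Finset.range n ×ˢ Finset.range n)
      (Function.onFun Disjoint fun ij : ℕ × ℕ => Bset n ij.1 ij.2) := by
    rintro ⟨i, j⟩ hij ⟨i', j'⟩ hij' hne
    simp only [Function.onFun]
    rw [Set.disjoint_left]
    rintro ⟨a, b⟩ ⟨ha, hb⟩ ⟨ha', hb'⟩
    have e1 : (i:ℤ) = i' := by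
      rw [← floor_eq_of_mem hn ha, ← floor_eq_of_mem hn ha']
    have e2 : (j:ℤ) = j' := by
      rw [← floor_eq_of_mem hn hb, ← floor_eq_of_mem hn hb']
    apply hne
    simp only [Prod.mk.injEq]
    exact ⟨by exact_mod_cast e1, by exact_mod_cast e2⟩
  have huB : ∀ ij ∈ Finset.range n ×ˢ Finset.range n,
      IntegrableOn u (Bset n (ij : ℕ × ℕ).1 ij.2) volume := by
    rintro ⟨i, j⟩ hij
    rw [Finset.mem_product, Finset.mem_range, Finset.mem_range] at hij
    have h' : IntegrableOn u SQ volume := hu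
    exact h'.mono_set (Bset_subset_SQ hn hij.1 hij.2)
  have hconst : ∀ ij ∈ Finset.range n ×ˢ Finset.range n, ∀ q ∈ Bset n (ij : ℕ × ℕ).1 ij.2,
      blockAvg n u q = (n:ℝ)^2 * ∫ p in Bset n ij.1 ij.2, u p := by
    rintro ij _ q hq
    rw [blockAvg_def, block_eq_Bset hn hq]
  have hbaB : ∀ ij ∈ Finset.range n ×ˢ Finset.range n,
      IntegrableOn (blockAvg n u) (Bset n (ij : ℕ × ℕ).1 ij.2) volume := by
    rintro ij hij
    rw [integrableOn_congr_fun (hconst ij hij) (measurableSet_Bset n _ _)]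
    exact integrableOn_const (volume_Bset_ne_top hn _ _)
  rw [integral_biUnion_finset _ hmeas hdisj hbaB, integral_biUnion_finset _ hmeas hdisj huB]
  apply Finset.sum_congr rfl
  rintro ij hij
  rw [setIntegral_congr_fun (measurableSet_Bset n _ _) (hconst ij hij), setIntegral_const, measureReal_def,
    volume_Bset_toReal hn, smul_eq_mul]
  have : (1:ℝ)/n^2 * ((n:ℝ)^2 * ∫ p in Bset n ij.1 ij.2, u p) = ∫ p in Bset n ij.1 ij.2, u p := by
    field_simp
  rw [this]

lemma abs_sub_eq_add_sub_two_min (a b : ℝ) : |a - b| = a + b - 2 * min a b := by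
  rcases le_total a b with h | h
  · rw [min_eq_left h, abs_of_nonpos (by linarith)]; ring
  · rw [min_eq_right h, abs_of_nonneg (by linarith)]; ring

lemma key {s : ℝ × ℝ → ℝ} (hsm : Measurable s)
    (hs : ∀ p ∈ SQ, s p ∈ Set.Ioo (0:ℝ) 1)
    (hls : Integrable (fun p => Real.log (s p)) sqMeasure)
    (hae : ∀ᵐ p ∂sqMeasure, Filter.Tendsto (fun n => blockAvg n s p) Filter.atTop (nhds (s p))) :
    Filter.Tendsto (fun n => ∫ p, |Real.log (blockAvg n s p) - Real.log (s p)| ∂sqMeasure)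
      Filter.atTop (nhds 0) := by
  set u : ℝ × ℝ → ℝ := fun p => -Real.log (s p) with hu_def
  set un : ℕ → ℝ × ℝ → ℝ := fun n p => -Real.log (blockAvg n s p) with hun_def
  have hum : Measurable u := (Real.measurable_log.comp hsm).neg
  have hunm : ∀ n, Measurable (un n) :=
    fun n => (Real.measurable_log.comp (measurable_blockAvg n s)).neg
  have hu_int : Integrable u sqMeasure := hls.neg
  have hblk : ∀ n, Integrable (blockAvg n u) sqMeasure := fun n =>
    integrable_blockAvg hum hu_int n
  -- a.e. facts
  have hae2 : ∀ᵐ q ∂sqMeasure, ∀ n, 1 ≤ n → 0 ≤ un n q ∧ un n q ≤ blockAvg n u q := by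
    filter_upwards [ae_mem_SG] with q hq n hn
    have hsub := block_subset_SQ hn hq
    have hpos : ∀ p ∈ block n q, 0 < s p := fun p hp => (hs p (hsub hp)).1
    have hle1 : ∀ p ∈ block n q, s p ≤ 1 := fun p hp => (hs p (hsub hp)).2.le
    have hb_pos : 0 < blockAvg n s q := blockAvg_pos hsm hn hsub hpos hle1
    have hb_le1 : blockAvg n s q ≤ 1 :=
      blockAvg_le_one hsm hn hle1 (fun p hp => (hpos p hp).le)
    constructor
    · simp only [hun_def, neg_nonneg]
      exact Real.log_nonpos hb_pos.le hb_le1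
    · have hj := jensen_log hsm hn hsub hs hls
      have hnegb : blockAvg n u q = -blockAvg n (fun p => Real.log (s p)) q := by
        rw [hu_def]
        exact blockAvg_neg _ n q
      simp only [hun_def]
      rw [hnegb]
      linarith
  have hun_nonneg : ∀ᵐ q ∂sqMeasure, ∀ n, 0 ≤ un n q := by
    filter_upwards [hae2] with q hq n
    rcases Nat.eq_zero_or_pos n with h | h
    · subst h
      simp [hun_def, blockAvg_zero]
    · exact (hq n h).1
  have hu_nonneg : ∀ᵐ q ∂sqMeasure, 0 ≤ u q := by
    filter_upwards [ae_mem_SQ] with q hq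
    simp only [hu_def, neg_nonneg]
    exact Real.log_nonpos (hs q hq).1.le (hs q hq).2.le
  have hun_int : ∀ n, Integrable (un n) sqMeasure := by
    intro n
    rcases Nat.eq_zero_or_pos n with h | h
    · subst h
      have h0 : un 0 = fun _ => (0:ℝ) := by
        funext q; simp [hun_def, blockAvg_zero]
      rw [h0]; exact integrable_zero _ _ _
    · apply Integrable.mono' (hblk n) (hunm n).aestronglyMeasurable
      filter_upwards [hae2] with q hq
      rw [Real.norm_eq_abs, abs_of_nonneg (hq n h).1]
      exact (hq n h).2
  have hun_le : ∀ n, 1 ≤ n → ∫ q, un n q ∂sqMeasure ≤ ∫ q, u q ∂sqMeasure := by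
    intro n hn
    have h1 : ∫ q, un n q ∂sqMeasure ≤ ∫ q, blockAvg n u q ∂sqMeasure := by
      apply integral_mono_ae (hun_int n) (hblk n)
      filter_upwards [hae2] with q hq
      exact (hq n hn).2
    rwa [integral_blockAvg hum hu_int hn] at h1
  have htend : ∀ᵐ q ∂sqMeasure, Filter.Tendsto (fun n => un n q) Filter.atTop (nhds (u q)) := by
    filter_upwards [hae, ae_mem_SQ] with q hq hqSQ
    have : Filter.Tendsto (fun n => Real.log (blockAvg n s q)) Filter.atTop
        (nhds (Real.log (s q))) :=
      ((Real.continuousAt_log (hs q hqSQ).1.ne').tendsto).comp hq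
    exact this.neg
  have hmin_int : ∀ n, Integrable (fun q => min (un n q) (u q)) sqMeasure := by
    intro n
    apply Integrable.mono' hu_int.abs (((hunm n).min hum).aestronglyMeasurable)
    filter_upwards [hun_nonneg, hu_nonneg] with q h1 h2
    rw [Real.norm_eq_abs, abs_le]
    constructor
    · have : 0 ≤ min (un n q) (u q) := le_min (h1 n) h2
      have := abs_nonneg (u q); linarith
    · have : min (un n q) (u q) ≤ u q := min_le_right _ _
      have := le_abs_self (u q); linarith
  have hm_tend : Filter.Tendsto (fun n => ∫ q, min (un n q) (u q) ∂sqMeasure)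
      Filter.atTop (nhds (∫ q, u q ∂sqMeasure)) := by
    apply tendsto_integral_of_dominated_convergence (fun q => |u q|)
      (fun n => ((hunm n).min hum).aestronglyMeasurable) hu_int.abs
    · intro n
      filter_upwards [hun_nonneg, hu_nonneg] with q h1 h2
      rw [Real.norm_eq_abs, abs_le]
      constructor
      · have : 0 ≤ min (un n q) (u q) := le_min (h1 n) h2
        have := abs_nonneg (u q); linarith
      · have : min (un n q) (u q) ≤ u q := min_le_right _ _
        have := le_abs_self (u q); linarith
    · filter_upwards [htend] with q hq
      have : Filter.Tendsto (fun n => min (un n q) (u q)) Filter.atTop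
          (nhds (min (u q) (u q))) := hq.min tendsto_const_nhds
      rwa [min_self] at this
  -- identity for the integral
  have hid : ∀ n, ∫ p, |Real.log (blockAvg n s p) - Real.log (s p)| ∂sqMeasure
      = (∫ q, un n q ∂sqMeasure) + (∫ q, u q ∂sqMeasure)
        - 2 * ∫ q, min (un n q) (u q) ∂sqMeasure := by
    intro n
    have hpt : (fun p => |Real.log (blockAvg n s p) - Real.log (s p)|)
        = fun q => un n q + u q - 2 * min (un n q) (u q) := by
      funext q
      rw [← abs_sub_eq_add_sub_two_min (un n q) (u q)]
      simp only [hun_def, hu_def, neg_sub_neg]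
      exact abs_sub_comm _ _
    rw [hpt]
    have hadd : Integrable (fun q => un n q + u q) sqMeasure := (hun_int n).add hu_int
    have hcm : Integrable (fun q => 2 * min (un n q) (u q)) sqMeasure :=
      (hmin_int n).const_mul 2
    rw [integral_sub hadd hcm, integral_add (hun_int n) hu_int, MeasureTheory.integral_const_mul]
  -- squeeze
  have hupper : Filter.Tendsto
      (fun n => 2 * ((∫ q, u q ∂sqMeasure) - ∫ q, min (un n q) (u q) ∂sqMeasure))
      Filter.atTop (nhds 0) := by
    have := (tendsto_const_nhds (x := ∫ q, u q ∂sqMeasure)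
        (f := Filter.atTop (α := ℕ))).sub hm_tend
    have h2 := this.const_mul (2:ℝ)
    simpa using h2
  apply tendsto_of_tendsto_of_tendsto_of_le_of_le' (tendsto_const_nhds (x := (0:ℝ))) hupper
  · exact Filter.Eventually.of_forall fun n => integral_nonneg fun q => abs_nonneg _
  · filter_upwards [Filter.eventually_ge_atTop 1] with n hn
    rw [hid n]
    have := hun_le n hn
    linarith

lemma Rent_expand (a : ℝ) {b : ℝ} (hb : b ∈ Set.Ioo (0:ℝ) 1) :
    Rent a b = (a * Real.log a + (1-a) * Real.log (1-a))
      - a * Real.log b - (1-a) * Real.log (1-b) := by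
  have hb0 : b ≠ 0 := hb.1.ne'
  have hb1 : (1:ℝ) - b ≠ 0 := by have := hb.2; intro h; apply absurd this; simp; linarith
  rw [Rent]
  rcases eq_or_ne a 0 with h0 | h0
  · subst h0
    simp [Real.log_div one_ne_zero hb1]
  rcases eq_or_ne a 1 with h1 | h1
  · subst h1
    simp [Real.log_div one_ne_zero hb0]
  have h1' : (1:ℝ) - a ≠ 0 := fun h => h1 (by linarith)
  rw [Real.log_div h0 hb0, Real.log_div h1' hb1]
  ring

lemma abs_mul_log_le_one {a : ℝ} (ha : a ∈ Set.Icc (0:ℝ) 1) : |a * Real.log a| ≤ 1 := by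
  rcases eq_or_lt_of_le ha.1 with h0 | h0
  · rw [← h0]; simp
  · have hle : Real.log a ≤ 0 := Real.log_nonpos h0.le ha.2
    have h2 : -Real.log a = Real.log a⁻¹ := (Real.log_inv a).symm
    have h3 : Real.log a⁻¹ ≤ a⁻¹ - 1 := Real.log_le_sub_one_of_pos (by positivity)
    have h4 : a * Real.log a⁻¹ ≤ a * (a⁻¹ - 1) :=
      mul_le_mul_of_nonneg_left h3 h0.le
    have h5 : a * (a⁻¹ - 1) = 1 - a := by field_simp
    rw [abs_mul, abs_of_nonneg h0.le, abs_of_nonpos hle]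
    calc a * -Real.log a = a * Real.log a⁻¹ := by rw [h2]
    _ ≤ 1 - a := by rw [← h5]; exact h4
    _ ≤ 1 := by linarith [h0.le]

lemma abs_Rent_le {a b : ℝ} (ha : a ∈ Set.Icc (0:ℝ) 1) (hb : b ∈ Set.Ioo (0:ℝ) 1) :
    |Rent a b| ≤ 2 + |Real.log b| + |Real.log (1-b)| := by
  have ha' : (1:ℝ) - a ∈ Set.Icc (0:ℝ) 1 := ⟨by linarith [ha.2], by linarith [ha.1]⟩
  rw [Rent_expand a hb]
  have h1 := abs_mul_log_le_one ha
  have h2 := abs_mul_log_le_one ha'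
  have h3 : |a * Real.log b| ≤ |Real.log b| := by
    rw [abs_mul]
    have : |a| ≤ 1 := by rw [abs_of_nonneg ha.1]; exact ha.2
    nlinarith [abs_nonneg (Real.log b)]
  have h4 : |(1-a) * Real.log (1-b)| ≤ |Real.log (1-b)| := by
    rw [abs_mul]
    have : |1-a| ≤ 1 := by rw [abs_of_nonneg ha'.1]; exact ha'.2
    nlinarith [abs_nonneg (Real.log (1-b))]
  calc |(a * Real.log a + (1-a) * Real.log (1-a)) - a * Real.log b - (1-a) * Real.log (1-b)|
      ≤ |a * Real.log a + (1-a) * Real.log (1-a)| + |a * Real.log b| + |(1-a) * Real.log (1-b)| := by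
        apply (abs_sub _ _).trans
        apply add_le_add_left
        exact abs_sub _ _
  _ ≤ (|a * Real.log a| + |(1-a) * Real.log (1-a)|) + |a * Real.log b| + |(1-a) * Real.log (1-b)| := by
        apply add_le_add_left; apply add_le_add_left; exact abs_add_le _ _
  _ ≤ 2 + |Real.log b| + |Real.log (1-b)| := by linarith

lemma abs_Rent_diff_le {a b b' : ℝ} (ha : a ∈ Set.Icc (0:ℝ) 1)
    (hb : b ∈ Set.Ioo (0:ℝ) 1) (hb' : b' ∈ Set.Ioo (0:ℝ) 1) :
    |Rent a b - Rent a b'| ≤ |Real.log b - Real.log b'| + |Real.log (1-b) - Real.log (1-b')| := by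
  rw [Rent_expand a hb, Rent_expand a hb']
  have hid : (a * Real.log a + (1-a) * Real.log (1-a)) - a * Real.log b - (1-a) * Real.log (1-b)
      - ((a * Real.log a + (1-a) * Real.log (1-a)) - a * Real.log b' - (1-a) * Real.log (1-b'))
      = a * (Real.log b' - Real.log b) + (1-a) * (Real.log (1-b') - Real.log (1-b)) := by ring
  rw [hid]
  have h3 : |a * (Real.log b' - Real.log b)| ≤ |Real.log b - Real.log b'| := by
    rw [abs_mul, abs_sub_comm (Real.log b') (Real.log b)]
    have : |a| ≤ 1 := by rw [abs_of_nonneg ha.1]; exact ha.2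
    nlinarith [abs_nonneg (Real.log b - Real.log b')]
  have h4 : |(1-a) * (Real.log (1-b') - Real.log (1-b))| ≤ |Real.log (1-b) - Real.log (1-b')| := by
    rw [abs_mul, abs_sub_comm (Real.log (1-b')) (Real.log (1-b))]
    have : |1-a| ≤ 1 := by
      rw [abs_of_nonneg (by linarith [ha.2] : (0:ℝ) ≤ 1 - a)]; linarith [ha.1]
    nlinarith [abs_nonneg (Real.log (1-b) - Real.log (1-b'))]
  calc |a * (Real.log b' - Real.log b) + (1-a) * (Real.log (1-b') - Real.log (1-b))|
      ≤ |a * (Real.log b' - Real.log b)| + |(1-a) * (Real.log (1-b') - Real.log (1-b))| :=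
        abs_add_le _ _
  _ ≤ _ := add_le_add h3 h4

lemma Rent_tendsto {b : ℝ} (hb : b ∈ Set.Ioo (0:ℝ) 1) {a : ℝ} {ak : ℕ → ℝ}
    (hak : Filter.Tendsto ak Filter.atTop (nhds a)) :
    Filter.Tendsto (fun k => Rent (ak k) b) Filter.atTop (nhds (Rent a b)) := by
  have hcont : Continuous (fun x : ℝ => (x * Real.log x + (1-x) * Real.log (1-x))
      - x * Real.log b - (1-x) * Real.log (1-b)) := by
    have c1 : Continuous (fun x : ℝ => x * Real.log x) := Real.continuous_mul_log
    have c2 : Continuous (fun x : ℝ => (1-x) * Real.log (1-x)) :=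
      Real.continuous_mul_log.comp (continuous_const.sub continuous_id)
    continuity
  have := (hcont.tendsto a).comp hak
  simp only [Function.comp_def] at this
  have he : ∀ x : ℝ, Rent x b = (x * Real.log x + (1-x) * Real.log (1-x))
      - x * Real.log b - (1-x) * Real.log (1-b) := fun x => Rent_expand x hb
  simp only [← he] at this
  rw [he a]
  simpa [he] using this

lemma integrable_log_blockAvg {s : ℝ × ℝ → ℝ} (hsm : Measurable s)
    (hs : ∀ p ∈ SQ, s p ∈ Set.Ioo (0:ℝ) 1)
    (hls : Integrable (fun p => Real.log (s p)) sqMeasure) {n : ℕ} (hn : 1 ≤ n) :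
    Integrable (fun p => Real.log (blockAvg n s p)) sqMeasure := by
  have hum : Measurable (fun p => -Real.log (s p)) := (Real.measurable_log.comp hsm).neg
  have hb : Integrable (blockAvg n (fun p => -Real.log (s p))) sqMeasure :=
    integrable_blockAvg hum hls.neg n
  apply Integrable.mono' hb
    (Real.measurable_log.comp (measurable_blockAvg n s)).aestronglyMeasurable
  filter_upwards [ae_mem_SG] with q hq
  have hsub := block_subset_SQ hn hq
  have hpos : ∀ p ∈ block n q, 0 < s p := fun p hp => (hs p (hsub hp)).1
  have hle1 : ∀ p ∈ block n q, s p ≤ 1 := fun p hp => (hs p (hsub hp)).2.le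
  have hb_pos : 0 < blockAvg n s q := blockAvg_pos hsm hn hsub hpos hle1
  have hb_le1 : blockAvg n s q ≤ 1 :=
    blockAvg_le_one hsm hn hle1 (fun p hp => (hpos p hp).le)
  have hnp : Real.log (blockAvg n s q) ≤ 0 := Real.log_nonpos hb_pos.le hb_le1
  have hj := jensen_log hsm hn hsub hs hls
  have hneg : blockAvg n (fun p => -Real.log (s p)) q
      = -blockAvg n (fun p => Real.log (s p)) q := blockAvg_neg _ n q
  rw [Real.norm_eq_abs]
  show |Real.log (blockAvg n s q)| ≤ _
  rw [abs_of_nonpos hnp, hneg]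
  linarith

lemma measurable_rent_comp {g h : ℝ × ℝ → ℝ} (hg : Measurable g) (hh : Measurable h) :
    Measurable (fun p => Rent (g p) (h p)) := by
  unfold Rent
  exact (hg.mul (Real.measurable_log.comp (hg.div hh))).add
    ((measurable_const.sub hg).mul
      (Real.measurable_log.comp ((measurable_const.sub hg).div (measurable_const.sub hh))))

lemma tendstoInMeasure_of_L2 {g : ℕ → ℝ × ℝ → ℝ} {f : ℝ × ℝ → ℝ}
    (hgm : ∀ k, Measurable (g k)) (hfm : Measurable f)
    (hbdd : ∀ k, ∀ᵐ p ∂sqMeasure, |g k p - f p| ≤ 1)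
    (hL2 : Filter.Tendsto (fun k => ∫ p, (g k p - f p)^2 ∂sqMeasure)
      Filter.atTop (nhds 0)) :
    TendstoInMeasure sqMeasure g Filter.atTop f := by
  rw [tendstoInMeasure_iff_dist]
  intro ε hε
  have hd_int : ∀ k, Integrable (fun p => (g k p - f p)^2) sqMeasure := by
    intro k
    apply Integrable.mono' (integrable_const (1:ℝ))
      (((hgm k).sub hfm).pow_const 2).aestronglyMeasurable
    filter_upwards [hbdd k] with p hp
    rw [Real.norm_eq_abs, abs_pow, sq_abs]
    change (g k p - f p)^2 ≤ 1
    nlinarith [abs_nonneg (g k p - f p), sq_abs (g k p - f p), abs_le.1 hp]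
  have hub : ∀ k, sqMeasure {x | ε ≤ dist (g k x) (f x)} ≤
      ENNReal.ofReal (∫ p, (g k p - f p)^2 ∂sqMeasure) / ENNReal.ofReal (ε^2) := by
    intro k
    have hsub : {x | ε ≤ dist (g k x) (f x)} ⊆
        {x | ENNReal.ofReal (ε^2) ≤ ENNReal.ofReal ((g k x - f x)^2)} := by
      intro x hx
      simp only [Set.mem_setOf_eq] at hx ⊢
      apply ENNReal.ofReal_le_ofReal
      rw [Real.dist_eq] at hx
      nlinarith [abs_nonneg (g k x - f x), sq_abs (g k x - f x)]
    have hmark := mul_meas_ge_le_lintegral₀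
      (f := fun x => ENNReal.ofReal ((g k x - f x)^2))
      ((ENNReal.measurable_ofReal.comp (((hgm k).sub hfm).pow_const 2)).aemeasurable)
      (ENNReal.ofReal (ε^2)) (μ := sqMeasure)
    have heq : ∫⁻ x, ENNReal.ofReal ((g k x - f x)^2) ∂sqMeasure
        = ENNReal.ofReal (∫ p, (g k p - f p)^2 ∂sqMeasure) := by
      rw [ofReal_integral_eq_lintegral_ofReal (hd_int k)
        (Filter.Eventually.of_forall fun p => sq_nonneg _)]
    have h1 : sqMeasure {x | ε ≤ dist (g k x) (f x)} ≤
        sqMeasure {x | ENNReal.ofReal (ε^2) ≤ ENNReal.ofReal ((g k x - f x)^2)} :=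
      measure_mono hsub
    have h2 : ENNReal.ofReal (ε^2) *
        sqMeasure {x | ENNReal.ofReal (ε^2) ≤ ENNReal.ofReal ((g k x - f x)^2)} ≤
        ENNReal.ofReal (∫ p, (g k p - f p)^2 ∂sqMeasure) := by
      rw [← heq]; exact hmark
    have hne : ENNReal.ofReal (ε^2) ≠ 0 := by
      simp only [ne_eq, ENNReal.ofReal_eq_zero, not_le]
      positivity
    calc sqMeasure {x | ε ≤ dist (g k x) (f x)}
        ≤ sqMeasure {x | ENNReal.ofReal (ε^2) ≤ ENNReal.ofReal ((g k x - f x)^2)} := h1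
    _ ≤ ENNReal.ofReal (∫ p, (g k p - f p)^2 ∂sqMeasure) / ENNReal.ofReal (ε^2) := by
        rw [ENNReal.le_div_iff_mul_le (Or.inl hne) (Or.inl ENNReal.ofReal_ne_top), mul_comm]
        exact h2
  have htop : Filter.Tendsto
      (fun k => ENNReal.ofReal (∫ p, (g k p - f p)^2 ∂sqMeasure) / ENNReal.ofReal (ε^2))
      Filter.atTop (nhds 0) := by
    have h0 : Filter.Tendsto (fun k => ENNReal.ofReal (∫ p, (g k p - f p)^2 ∂sqMeasure))
        Filter.atTop (nhds 0) := by
      have := (ENNReal.continuous_ofReal.tendsto 0).comp hL2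
      simpa [Function.comp_def] using this
    have hne : ENNReal.ofReal (ε^2) ≠ 0 := by
      simp only [ne_eq, ENNReal.ofReal_eq_zero, not_le]
      positivity
    have := ENNReal.Tendsto.div_const h0 (Or.inr hne)
    simpa using this
  exact tendsto_of_tendsto_of_tendsto_of_le_of_le tendsto_const_nhds htop
    (fun k => zero_le) hub

end BAux

theorem blockAvg_rate_convergence
    (r : ℝ × ℝ → ℝ) (hrm : Measurable r)
    (hr : ∀ p ∈ Set.Icc (0:ℝ) 1 ×ˢ Set.Icc (0:ℝ) 1, r p ∈ Set.Ioo (0:ℝ) 1)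
    (hlogr : Integrable (fun p => Real.log (r p)) sqMeasure)
    (hlogr' : Integrable (fun p => Real.log (1 - r p)) sqMeasure)
    (f : ℝ × ℝ → ℝ) (hfm : Measurable f)
    (hf01 : ∀ p ∈ Set.Icc (0:ℝ) 1 ×ˢ Set.Icc (0:ℝ) 1, f p ∈ Set.Icc (0:ℝ) 1)
    (hfsym : ∀ x y, f (x, y) = f (y, x))
    (hrae : ∀ᵐ p ∂sqMeasure,
      Filter.Tendsto (fun n => blockAvg n r p) Filter.atTop (nhds (r p)))
    (hfL2 : Filter.Tendsto (fun n => ∫ p, (blockAvg n f p - f p)^2 ∂sqMeasure)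
      Filter.atTop (nhds 0)) :
    Filter.Tendsto
      (fun n => ∫ p, Rent (blockAvg n f p) (blockAvg n r p) ∂sqMeasure)
      Filter.atTop (nhds (∫ p, Rent (f p) (r p) ∂sqMeasure)) := by
  classical
  have hr' : ∀ p ∈ BAux.SQ, r p ∈ Set.Ioo (0:ℝ) 1 := hr
  have hf01' : ∀ p ∈ BAux.SQ, f p ∈ Set.Icc (0:ℝ) 1 := hf01
  have hr1m : Measurable (fun p => 1 - r p) := measurable_const.sub hrm
  have hr1 : ∀ p ∈ BAux.SQ, (fun p => 1 - r p) p ∈ Set.Ioo (0:ℝ) 1 := by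
    intro p hp
    have := hr' p hp
    exact ⟨by simp; linarith [this.2], by simp; linarith [this.1]⟩
  -- a.e. membership
  have haeSQ := BAux.ae_mem_SQ
  have haeSG := BAux.ae_mem_SG
  -- blockAvg f ∈ [0,1] a.e. for all n
  have hFb01 : ∀ᵐ q ∂sqMeasure, ∀ n, blockAvg n f q ∈ Set.Icc (0:ℝ) 1 := by
    filter_upwards [haeSG] with q hq n
    rcases Nat.eq_zero_or_pos n with h | h
    · subst h
      rw [BAux.blockAvg_zero]
      exact ⟨le_refl 0, zero_le_one⟩
    · have hsub := BAux.block_subset_SQ h hq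
      constructor
      · exact BAux.blockAvg_nonneg (fun p hp => (hf01' p (hsub hp)).1)
      · exact BAux.blockAvg_le_one hfm h (fun p hp => (hf01' p (hsub hp)).2)
          (fun p hp => (hf01' p (hsub hp)).1)
  -- blockAvg r ∈ (0,1) a.e. for n ≥ 1, and complement identity
  have hRb : ∀ᵐ q ∂sqMeasure, ∀ n, 1 ≤ n → blockAvg n r q ∈ Set.Ioo (0:ℝ) 1 ∧
      blockAvg n (fun p => 1 - r p) q = 1 - blockAvg n r q := by
    filter_upwards [haeSG] with q hq n hn
    have hsub := BAux.block_subset_SQ hn hq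
    have hpos : ∀ p ∈ BAux.block n q, 0 < r p := fun p hp => (hr' p (hsub hp)).1
    have hlt : ∀ p ∈ BAux.block n q, r p < 1 := fun p hp => (hr' p (hsub hp)).2
    have hint : IntegrableOn r (BAux.block n q) volume := by
      apply BAux.integrableOn_block_of_bounded hrm (M := 1)
      intro p hp; rw [Real.norm_eq_abs, abs_le]
      exact ⟨by linarith [hpos p hp], (hlt p hp).le⟩
    have hone := BAux.blockAvg_one_sub hn hint
    refine ⟨⟨?_, ?_⟩, hone⟩
    · exact BAux.blockAvg_pos hrm hn hsub hpos (fun p hp => (hlt p hp).le)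
    · have hp2 : 0 < blockAvg n (fun p => 1 - r p) q := by
        apply BAux.blockAvg_pos hr1m hn hsub
        · exact fun p hp => by simp; linarith [hlt p hp]
        · exact fun p hp => by simp; linarith [hpos p hp]
      rw [hone] at hp2; linarith
  -- L¹ convergence of logs
  have hT1 : Filter.Tendsto
      (fun n => ∫ p, |Real.log (blockAvg n r p) - Real.log (r p)| ∂sqMeasure)
      Filter.atTop (nhds 0) := BAux.key hrm hr' hlogr hrae
  have hae1r : ∀ᵐ p ∂sqMeasure, Filter.Tendsto (fun n => blockAvg n (fun p => 1 - r p) p)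
      Filter.atTop (nhds (1 - r p)) := by
    filter_upwards [hrae, hRb] with p hp hp2
    apply Filter.Tendsto.congr' _ (tendsto_const_nhds.sub hp)
    filter_upwards [Filter.eventually_ge_atTop 1] with n hn
    exact ((hp2 n hn).2).symm
  have hT2' : Filter.Tendsto
      (fun n => ∫ p, |Real.log (blockAvg n (fun p => 1 - r p) p) - Real.log (1 - r p)| ∂sqMeasure)
      Filter.atTop (nhds 0) := BAux.key hr1m hr1 hlogr' hae1r
  have hT2 : Filter.Tendsto
      (fun n => ∫ p, |Real.log (1 - blockAvg n r p) - Real.log (1 - r p)| ∂sqMeasure)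
      Filter.atTop (nhds 0) := by
    apply Filter.Tendsto.congr' _ hT2'
    filter_upwards [Filter.eventually_ge_atTop 1] with n hn
    apply integral_congr_ae
    filter_upwards [hRb] with q hq
    rw [(hq n hn).2]
  -- integrability of logs of block averages
  have hlogRb_int : ∀ n, 1 ≤ n → Integrable (fun p => Real.log (blockAvg n r p)) sqMeasure :=
    fun n hn => BAux.integrable_log_blockAvg hrm hr' hlogr hn
  have hlog1Rb_int : ∀ n, 1 ≤ n →
      Integrable (fun p => Real.log (1 - blockAvg n r p)) sqMeasure := by
    intro n hn
    apply (BAux.integrable_log_blockAvg hr1m hr1 hlogr' hn).congr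
    filter_upwards [hRb] with q hq
    rw [(hq n hn).2]
  -- integrability of Rent integrands
  have hRent_int : ∀ n, 1 ≤ n →
      Integrable (fun p => Rent (blockAvg n f p) (blockAvg n r p)) sqMeasure := by
    intro n hn
    have hA : Integrable (fun p => blockAvg n f p * Real.log (blockAvg n f p)
        + (1 - blockAvg n f p) * Real.log (1 - blockAvg n f p)) sqMeasure := by
      apply Integrable.mono' (integrable_const (2:ℝ))
      · apply Measurable.aestronglyMeasurable
        have h1 := BAux.measurable_blockAvg n f
        exact (h1.mul (Real.measurable_log.comp h1)).add
          ((measurable_const.sub h1).mul (Real.measurable_log.comp (measurable_const.sub h1)))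
      filter_upwards [hFb01] with q hq
      have h1 := BAux.abs_mul_log_le_one (hq n)
      have h2 : (1 : ℝ) - blockAvg n f q ∈ Set.Icc (0:ℝ) 1 :=
        ⟨by linarith [(hq n).2], by linarith [(hq n).1]⟩
      have h3 := BAux.abs_mul_log_le_one h2
      rw [Real.norm_eq_abs]
      calc |blockAvg n f q * Real.log (blockAvg n f q)
          + (1 - blockAvg n f q) * Real.log (1 - blockAvg n f q)| ≤ _ + _ := abs_add_le _ _
      _ ≤ 2 := by linarith
    have hB : Integrable (fun p => blockAvg n f p * Real.log (blockAvg n r p)) sqMeasure := by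
      apply Integrable.mono' (hlogRb_int n hn).abs
      · exact ((BAux.measurable_blockAvg n f).mul
          (Real.measurable_log.comp (BAux.measurable_blockAvg n r))).aestronglyMeasurable
      filter_upwards [hFb01] with q hq
      rw [Real.norm_eq_abs, abs_mul]
      have ha : |blockAvg n f q| ≤ 1 := by
        rw [abs_of_nonneg (hq n).1]; exact (hq n).2
      nlinarith [abs_nonneg (Real.log (blockAvg n r q))]
    have hC : Integrable (fun p => (1 - blockAvg n f p) * Real.log (1 - blockAvg n r p))
        sqMeasure := by
      apply Integrable.mono' (hlog1Rb_int n hn).abs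
      · exact ((measurable_const.sub (BAux.measurable_blockAvg n f)).mul
          (Real.measurable_log.comp
            (measurable_const.sub (BAux.measurable_blockAvg n r)))).aestronglyMeasurable
      filter_upwards [hFb01] with q hq
      rw [Real.norm_eq_abs, abs_mul]
      have ha : |1 - blockAvg n f q| ≤ 1 := by
        rw [abs_of_nonneg (by linarith [(hq n).2])]; linarith [(hq n).1]
      nlinarith [abs_nonneg (Real.log (1 - blockAvg n r q))]
    have hW : Integrable (fun p => (blockAvg n f p * Real.log (blockAvg n f p)
        + (1 - blockAvg n f p) * Real.log (1 - blockAvg n f p))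
        - blockAvg n f p * Real.log (blockAvg n r p)
        - (1 - blockAvg n f p) * Real.log (1 - blockAvg n r p)) sqMeasure := by
      have := (hA.sub hB).sub hC
      simpa [Pi.sub_def] using this
    apply hW.congr
    filter_upwards [hRb] with q hq
    exact (BAux.Rent_expand (blockAvg n f q) (hq n hn).1).symm
  have hRentr_int : ∀ n, Integrable (fun p => Rent (blockAvg n f p) (r p)) sqMeasure := by
    intro n
    have hA : Integrable (fun p => blockAvg n f p * Real.log (blockAvg n f p)
        + (1 - blockAvg n f p) * Real.log (1 - blockAvg n f p)) sqMeasure := by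
      apply Integrable.mono' (integrable_const (2:ℝ))
      · apply Measurable.aestronglyMeasurable
        have h1 := BAux.measurable_blockAvg n f
        exact (h1.mul (Real.measurable_log.comp h1)).add
          ((measurable_const.sub h1).mul (Real.measurable_log.comp (measurable_const.sub h1)))
      filter_upwards [hFb01] with q hq
      have h1 := BAux.abs_mul_log_le_one (hq n)
      have h2 : (1 : ℝ) - blockAvg n f q ∈ Set.Icc (0:ℝ) 1 :=
        ⟨by linarith [(hq n).2], by linarith [(hq n).1]⟩
      have h3 := BAux.abs_mul_log_le_one h2
      rw [Real.norm_eq_abs]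
      calc |blockAvg n f q * Real.log (blockAvg n f q)
          + (1 - blockAvg n f q) * Real.log (1 - blockAvg n f q)| ≤ _ + _ := abs_add_le _ _
      _ ≤ 2 := by linarith
    have hB : Integrable (fun p => blockAvg n f p * Real.log (r p)) sqMeasure := by
      apply Integrable.mono' hlogr.abs
      · exact ((BAux.measurable_blockAvg n f).mul
          (Real.measurable_log.comp hrm)).aestronglyMeasurable
      filter_upwards [hFb01] with q hq
      rw [Real.norm_eq_abs, abs_mul]
      have ha : |blockAvg n f q| ≤ 1 := by
        rw [abs_of_nonneg (hq n).1]; exact (hq n).2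
      nlinarith [abs_nonneg (Real.log (r q))]
    have hC : Integrable (fun p => (1 - blockAvg n f p) * Real.log (1 - r p)) sqMeasure := by
      apply Integrable.mono' hlogr'.abs
      · exact ((measurable_const.sub (BAux.measurable_blockAvg n f)).mul
          (Real.measurable_log.comp (measurable_const.sub hrm))).aestronglyMeasurable
      filter_upwards [hFb01] with q hq
      rw [Real.norm_eq_abs, abs_mul]
      have ha : |1 - blockAvg n f q| ≤ 1 := by
        rw [abs_of_nonneg (by linarith [(hq n).2])]; linarith [(hq n).1]
      nlinarith [abs_nonneg (Real.log (1 - r q))]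
    have hW : Integrable (fun p => (blockAvg n f p * Real.log (blockAvg n f p)
        + (1 - blockAvg n f p) * Real.log (1 - blockAvg n f p))
        - blockAvg n f p * Real.log (r p)
        - (1 - blockAvg n f p) * Real.log (1 - r p)) sqMeasure := by
      have := (hA.sub hB).sub hC
      simpa [Pi.sub_def] using this
    apply hW.congr
    filter_upwards [haeSQ] with q hq
    exact (BAux.Rent_expand (blockAvg n f q) (hr' q hq)).symm
  -- Step D1 : difference of integrals tends to 0
  have hD1 : Filter.Tendsto (fun n =>
      (∫ p, Rent (blockAvg n f p) (blockAvg n r p) ∂sqMeasure)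
      - ∫ p, Rent (blockAvg n f p) (r p) ∂sqMeasure) Filter.atTop (nhds 0) := by
    have hbound : ∀ n, 1 ≤ n →
        |(∫ p, Rent (blockAvg n f p) (blockAvg n r p) ∂sqMeasure)
          - ∫ p, Rent (blockAvg n f p) (r p) ∂sqMeasure|
        ≤ (∫ p, |Real.log (blockAvg n r p) - Real.log (r p)| ∂sqMeasure)
          + ∫ p, |Real.log (1 - blockAvg n r p) - Real.log (1 - r p)| ∂sqMeasure := by
      intro n hn
      have hsub : (∫ p, Rent (blockAvg n f p) (blockAvg n r p) ∂sqMeasure)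
          - ∫ p, Rent (blockAvg n f p) (r p) ∂sqMeasure
          = ∫ p, (Rent (blockAvg n f p) (blockAvg n r p)
            - Rent (blockAvg n f p) (r p)) ∂sqMeasure :=
        (integral_sub (hRent_int n hn) (hRentr_int n)).symm
      rw [hsub]
      have hdint : Integrable (fun p => Rent (blockAvg n f p) (blockAvg n r p)
          - Rent (blockAvg n f p) (r p)) sqMeasure := by
        have := (hRent_int n hn).sub (hRentr_int n)
        simpa [Pi.sub_def] using this
      have habs : |∫ p, (Rent (blockAvg n f p) (blockAvg n r p)
          - Rent (blockAvg n f p) (r p)) ∂sqMeasure|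
          ≤ ∫ p, |Rent (blockAvg n f p) (blockAvg n r p)
            - Rent (blockAvg n f p) (r p)| ∂sqMeasure := by
        simpa [Real.norm_eq_abs] using norm_integral_le_integral_norm (μ := sqMeasure)
          (fun p => Rent (blockAvg n f p) (blockAvg n r p) - Rent (blockAvg n f p) (r p))
      apply habs.trans
      have hsum_int : Integrable (fun p => |Real.log (blockAvg n r p) - Real.log (r p)|
          + |Real.log (1 - blockAvg n r p) - Real.log (1 - r p)|) sqMeasure := by
        have h1 : Integrable (fun p => Real.log (blockAvg n r p) - Real.log (r p)) sqMeasure := by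
          have := (hlogRb_int n hn).sub hlogr
          simpa [Pi.sub_def] using this
        have h2 : Integrable (fun p => Real.log (1 - blockAvg n r p)
            - Real.log (1 - r p)) sqMeasure := by
          have := (hlog1Rb_int n hn).sub hlogr'
          simpa [Pi.sub_def] using this
        have := h1.abs.add h2.abs
        simpa [Pi.add_def] using this
      have hmono : ∫ p, |Rent (blockAvg n f p) (blockAvg n r p)
          - Rent (blockAvg n f p) (r p)| ∂sqMeasure
          ≤ ∫ p, (|Real.log (blockAvg n r p) - Real.log (r p)|
            + |Real.log (1 - blockAvg n r p) - Real.log (1 - r p)|) ∂sqMeasure := by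
        apply integral_mono_ae hdint.abs hsum_int
        filter_upwards [hFb01, hRb, haeSQ] with q h1 h2 h3
        exact BAux.abs_Rent_diff_le (h1 n) (h2 n hn).1 (hr' q h3)
      apply hmono.trans
      rw [integral_add]
      · have h1 : Integrable (fun p => Real.log (blockAvg n r p) - Real.log (r p)) sqMeasure := by
          have := (hlogRb_int n hn).sub hlogr
          simpa [Pi.sub_def] using this
        exact h1.abs
      · have h2 : Integrable (fun p => Real.log (1 - blockAvg n r p)
            - Real.log (1 - r p)) sqMeasure := by
          have := (hlog1Rb_int n hn).sub hlogr'
          simpa [Pi.sub_def] using this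
        exact h2.abs
    have hc : Filter.Tendsto (fun n =>
        (∫ p, |Real.log (blockAvg n r p) - Real.log (r p)| ∂sqMeasure)
        + ∫ p, |Real.log (1 - blockAvg n r p) - Real.log (1 - r p)| ∂sqMeasure)
        Filter.atTop (nhds 0) := by
      have := hT1.add hT2
      simpa using this
    have hcneg : Filter.Tendsto (fun n => -(
        (∫ p, |Real.log (blockAvg n r p) - Real.log (r p)| ∂sqMeasure)
        + ∫ p, |Real.log (1 - blockAvg n r p) - Real.log (1 - r p)| ∂sqMeasure))
        Filter.atTop (nhds 0) := by
      have := hc.neg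
      simpa using this
    apply tendsto_of_tendsto_of_tendsto_of_le_of_le' hcneg hc
    · filter_upwards [Filter.eventually_ge_atTop 1] with n hn
      have := hbound n hn
      have h2 := abs_le.1 this
      linarith [h2.1]
    · filter_upwards [Filter.eventually_ge_atTop 1] with n hn
      exact (abs_le.1 (hbound n hn)).2
  -- Step D2 : ∫ Rent (blockAvg n f) r → ∫ Rent f r
  have hD2 : Filter.Tendsto (fun n => ∫ p, Rent (blockAvg n f p) (r p) ∂sqMeasure)
      Filter.atTop (nhds (∫ p, Rent (f p) (r p) ∂sqMeasure)) := by
    apply Filter.tendsto_of_subseq_tendsto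
    intro ns hns
    have hL2' : Filter.Tendsto (fun k => ∫ p, (blockAvg (ns k) f p - f p)^2 ∂sqMeasure)
        Filter.atTop (nhds 0) := hfL2.comp hns
    have hbdd : ∀ k, ∀ᵐ p ∂sqMeasure, |blockAvg (ns k) f p - f p| ≤ 1 := by
      intro k
      filter_upwards [hFb01, haeSQ] with p h1 h2
      have h3 := h1 (ns k)
      have h4 := hf01' p h2
      rw [abs_le]
      constructor <;> [linarith [h3.1, h4.2]; linarith [h3.2, h4.1]]
    have hmeas : TendstoInMeasure sqMeasure (fun k => blockAvg (ns k) f) Filter.atTop f :=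
      BAux.tendstoInMeasure_of_L2 (fun k => BAux.measurable_blockAvg (ns k) f) hfm hbdd hL2'
    obtain ⟨ms, hms_mono, hms_ae⟩ := hmeas.exists_seq_tendsto_ae
    refine ⟨ms, ?_⟩
    apply tendsto_integral_of_dominated_convergence
      (fun p => 2 + |Real.log (r p)| + |Real.log (1 - r p)|)
    · intro k
      exact (BAux.measurable_rent_comp (BAux.measurable_blockAvg (ns (ms k)) f)
        hrm).aestronglyMeasurable
    · have h1 : Integrable (fun p : ℝ × ℝ => (2:ℝ)) sqMeasure := integrable_const _
      have := (h1.add hlogr.abs).add hlogr'.abs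
      simpa [Pi.add_def] using this
    · intro k
      filter_upwards [hFb01, haeSQ] with p h1 h2
      rw [Real.norm_eq_abs]
      exact BAux.abs_Rent_le (h1 (ns (ms k))) (hr' p h2)
    · filter_upwards [hms_ae, haeSQ] with p h1 h2
      exact BAux.Rent_tendsto (hr' p h2) h1
  have := hD1.add hD2
  simpa using this
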